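/- Let M be a lattice of rank n, and let u_1, …, u_r be pairwise ℤ-linearly independent primitive elements of M. Then the elements 1 − e^{u_1}, …, 1 − e^{u_r} of the group algebra ℤ[M] are pairwise non-associate (in particular, for i ≠ j, 1 − e^{u_i} does not divide 1 − e^{u_j} when u_i and u_j are not proportional). -/

import Mathlib

/-- In the Laurent polynomial ring `ℤ[ℤⁿ]` (the group algebra of the lattice
`M = ℤⁿ`), if `u_1, …, u_r` are pairwise `ℤ`-linearly independent primitive
vectors, then the elements `1 - e^{u_i}` are pairwise non-associate; in
particular for `i ≠ j`, `1 - e^{u_i}` does not divide `1 - e^{u_j}`. -/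
theorem stmt_11 (n r : ℕ) (u : Fin r → (Fin n → ℤ))
    (hprim : ∀ (i : Fin r) (c : ℤ) (v : Fin n → ℤ), u i = c • v → IsUnit c)
    (hindep : ∀ i j : Fin r, i ≠ j → LinearIndependent ℤ ![u i, u j]) :
    ∀ i j : Fin r, i ≠ j →
      ¬ Associated
          (1 - AddMonoidAlgebra.single (u i) (1 : ℤ))
          (1 - AddMonoidAlgebra.single (u j) (1 : ℤ)) ∧
      ¬ ((1 - AddMonoidAlgebra.single (u i) (1 : ℤ)) ∣
          (1 - AddMonoidAlgebra.single (u j) (1 : ℤ))) := by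
  intro i j hij
  set a := u i with ha
  set b := u j with hb
  have hind := hindep i j hij
  have hane : a ≠ 0 := by simpa using hind.ne_zero 0
  obtain ⟨k, hk⟩ : ∃ k, a k ≠ 0 := by
    by_contra h; push_neg at h; exact hane (funext h)
  obtain ⟨l, hl⟩ : ∃ l, a l * b k - a k * b l ≠ 0 := by
    by_contra h
    push_neg at h
    have hcomb : (∑ x : Fin 2, (![b k, -(a k)] : Fin 2 → ℤ) x • (![a, b] : Fin 2 → Fin n → ℤ) x) = 0 := by
      simp [Fin.sum_univ_two]
      funext l
      have := h l
      simp [Pi.add_apply]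
      ring_nf
      linarith [h l]
    have := Fintype.linearIndependent_iff.mp hind ![b k, -(a k)] hcomb 1
    simp at this
    exact hk this
  -- the additive character
  let f : (Fin n → ℤ) →+ ℤ := AddMonoidHom.mk' (fun v => a l * v k - a k * v l)
    (by intro x y; simp [Pi.add_apply]; ring)
  have hfa : f a = 0 := by simp [f]; ring
  have hfb : f b ≠ 0 := by
    simpa [f, sub_eq_zero] using fun hh => hl (by rw [sub_eq_zero]; linarith [hh])
  let φ := AddMonoidAlgebra.mapDomainRingHom (M := Fin n → ℤ) ℤ f
  have hsingle : ∀ v : Fin n → ℤ, φ (AddMonoidAlgebra.single v 1) = AddMonoidAlgebra.single (f v) 1 :=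
    fun v => AddMonoidAlgebra.mapDomain_single
  have hφi : φ (1 - AddMonoidAlgebra.single a 1) = 0 := by
    rw [map_sub, map_one, hsingle, hfa, ← AddMonoidAlgebra.one_def, sub_self]
  have hφj : φ (1 - AddMonoidAlgebra.single b 1) ≠ 0 := by
    rw [map_sub, map_one, hsingle]
    intro hz
    have hc := sub_eq_zero.mp hz
    rw [AddMonoidAlgebra.one_def] at hc
    rcases AddMonoidAlgebra.single_inj.mp hc with ⟨h0, -⟩ | ⟨h1, -⟩
    · exact hfb h0.symm
    · exact one_ne_zero h1
  have hndvd : ¬ ((1 - AddMonoidAlgebra.single a (1 : ℤ)) ∣ (1 - AddMonoidAlgebra.single b (1 : ℤ))) := by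
    intro hd
    have := map_dvd φ hd
    rw [hφi] at this
    exact hφj (zero_dvd_iff.mp this)
  exact ⟨fun hA => hndvd hA.dvd, hndvd⟩
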